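/- Let n and s be integers with 2 ≤ s ≤ n − 1, and let d, e ∈ K satisfy v(d) = 0, v(1 − d) = n − s, and v(e) = n − (s−1)/2. Let α(t) = Σ_{ℓ≥0} a_ℓ t^ℓ be a formal power series over K with a₀ = 1 and v(a_ℓ) = (1/2)·S(ℓ) for all ℓ ≥ 1. Then the formal power series ᾶ(t) := d·(1−d)·α(t)/((d + e·t)·(1 − d − e·t)) is well defined over K (the constant terms d and 1−d of the two factors in the denominator are nonzero), and writing ᾶ(t) = Σ_{ℓ≥0} ã_ℓ t^ℓ one has ã₀ = 1 and v(ã_ℓ) = (1/2)·S(ℓ) for all ℓ ≥ 1. -/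

import Mathlib

def S (ℓ : ℕ) : ℕ := (Nat.digits 2 ℓ).sum

lemma S_def (m : ℕ) (hm : m ≠ 0) : S m = m % 2 + S (m / 2) := by
  unfold S
  rw [Nat.digits_def' (by norm_num : 1 < 2) (Nat.pos_of_ne_zero hm)]
  simp

lemma S_succ_le (m : ℕ) : S (m + 1) ≤ S m + 1 := by
  induction m using Nat.strong_induction_on with
  | _ m ih =>
    rcases Nat.eq_zero_or_pos m with h0 | hpos
    · subst h0; simp [S]
    rw [S_def (m+1) (by omega)]
    have hm := S_def m (by omega)
    rcases Nat.even_or_odd m with he | ho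
    · have hmod : m % 2 = 0 := Nat.even_iff.mp he
      have h2 : (m+1) % 2 = 1 := by omega
      have h3 : (m+1)/2 = m/2 := by omega
      rw [h2, h3]; omega
    · have hmod : m % 2 = 1 := Nat.odd_iff.mp ho
      have h2 : (m+1) % 2 = 0 := by omega
      have h3 : (m+1)/2 = m/2 + 1 := by omega
      rw [h2, h3]
      have := ih (m/2) (by omega)
      omega

theorem stmt_13 (K : Type*) [Field K] [CharZero K] (v : K → WithTop ℚ)
    (hv0 : ∀ x : K, v x = ⊤ ↔ x = 0)
    (hvmul : ∀ x y : K, v (x * y) = v x + v y)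
    (hvadd : ∀ x y : K, min (v x) (v y) ≤ v (x + y))
    (hv2 : v 2 = 1)
    (n s : ℕ) (hs2 : 2 ≤ s) (hsn : s + 1 ≤ n)
    (d e : K)
    (hvd : v d = ((0 : ℚ) : WithTop ℚ))
    (hvd1 : v (1 - d) = (((n : ℚ) - (s : ℚ) : ℚ) : WithTop ℚ))
    (hve : v e = (((n : ℚ) - ((s : ℚ) - 1) / 2 : ℚ) : WithTop ℚ))
    (α : PowerSeries K)
    (hα0 : PowerSeries.coeff (R := K) 0 α = 1)
    (hα : ∀ ℓ : ℕ, 1 ≤ ℓ → v (PowerSeries.coeff (R := K) ℓ α) = (((S ℓ : ℚ) / 2 : ℚ) : WithTop ℚ)) :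
    d ≠ 0 ∧ 1 - d ≠ 0 ∧
    (PowerSeries.coeff (R := K) 0
        (PowerSeries.C (R := K) (d * (1 - d)) * α *
          ((PowerSeries.C (R := K) d + PowerSeries.C (R := K) e * PowerSeries.X) *
            (PowerSeries.C (R := K) (1 - d) - PowerSeries.C (R := K) e * PowerSeries.X))⁻¹) = 1) ∧
    (∀ ℓ : ℕ, 1 ≤ ℓ →
      v (PowerSeries.coeff (R := K) ℓ
          (PowerSeries.C (R := K) (d * (1 - d)) * α *
            ((PowerSeries.C (R := K) d + PowerSeries.C (R := K) e * PowerSeries.X) *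
              (PowerSeries.C (R := K) (1 - d) - PowerSeries.C (R := K) e * PowerSeries.X))⁻¹)) =
        (((S ℓ : ℚ) / 2 : ℚ) : WithTop ℚ)) := by
  classical
  have hvtop : ∀ x : K, x ≠ 0 → v x ≠ ⊤ := fun x hx h => hx ((hv0 x).mp h)
  have hd : d ≠ 0 := by
    intro h
    have h2 := (hv0 d).mpr h
    rw [hvd] at h2
    exact WithTop.coe_ne_top h2
  have hd1 : (1 : K) - d ≠ 0 := by
    intro h
    have h2 := (hv0 _).mpr h
    rw [hvd1] at h2
    exact WithTop.coe_ne_top h2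
  have hv1 : v 1 = ((0 : ℚ) : WithTop ℚ) := by
    have h := hvmul 1 1
    rw [one_mul] at h
    have hne : v 1 ≠ ⊤ := hvtop 1 one_ne_zero
    lift v 1 to ℚ using hne with q hq
    have h2 : q = q + q := by exact_mod_cast h
    have h3 : q = 0 := by linarith
    exact_mod_cast h3
  have hvneg : ∀ x : K, v (-x) = v x := by
    have hm1 : v (-1 : K) = ((0 : ℚ) : WithTop ℚ) := by
      have h := hvmul (-1 : K) (-1)
      rw [neg_mul_neg, one_mul, hv1] at h
      have hne : v (-1 : K) ≠ ⊤ := hvtop _ (by norm_num)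
      lift v (-1 : K) to ℚ using hne with q hq
      have h2 : (0 : ℚ) = q + q := by exact_mod_cast h
      have h3 : q = 0 := by linarith
      exact_mod_cast h3
    intro x
    have h := hvmul (-1) x
    rw [neg_one_mul, hm1] at h
    simpa using h
  have hlt : ∀ x y : K, v x < v y → v (x + y) = v x := by
    intro x y hxy
    refine le_antisymm ?_ ?_
    · have h := hvadd (x + y) (-y)
      rw [hvneg, add_neg_cancel_right] at h
      rcases min_le_iff.mp h with h1 | h1
      · exact h1
      · exact absurd h1 (not_le.mpr hxy)
    · have h := hvadd x y
      rwa [min_eq_left hxy.le] at h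
  have vmul : ∀ (x y : K) (p q : ℚ), v x = (p : WithTop ℚ) → v y = (q : WithTop ℚ) →
      v (x * y) = ((p + q : ℚ) : WithTop ℚ) := by
    intro x y p q hx hy
    rw [hvmul, hx, hy]
    exact_mod_cast rfl
  have hns : (s : ℚ) + 1 ≤ (n : ℚ) := by exact_mod_cast hsn
  have hs2' : (2 : ℚ) ≤ (s : ℚ) := by exact_mod_cast hs2
  have hv12d : v (1 - 2 * d) = ((0 : ℚ) : WithTop ℚ) := by
    have h0 : v (-d) = ((0 : ℚ) : WithTop ℚ) := by rw [hvneg]; exact hvd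
    have hlt' : v (-d) < v (1 - d) := by
      rw [h0, hvd1]
      exact_mod_cast (by linarith : (0 : ℚ) < (n : ℚ) - s)
    have h := hlt (-d) (1 - d) hlt'
    rw [h0] at h
    rw [show (1 : K) - 2 * d = -d + (1 - d) by ring]
    exact h
  set Dps := (PowerSeries.C (R := K) d + PowerSeries.C (R := K) e * PowerSeries.X) *
      (PowerSeries.C (R := K) (1 - d) - PowerSeries.C (R := K) e * PowerSeries.X) with hDps
  set B := PowerSeries.C (R := K) (d * (1 - d)) * α * Dps⁻¹ with hB
  have hconst : PowerSeries.constantCoeff (R := K) Dps = d * (1 - d) := by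
    simp [hDps]
  have hcne : PowerSeries.constantCoeff (R := K) Dps ≠ 0 := by
    rw [hconst]; exact mul_ne_zero hd hd1
  have hBD : B * Dps = PowerSeries.C (R := K) (d * (1 - d)) * α := by
    rw [hB, mul_assoc, PowerSeries.inv_mul_cancel Dps hcne, mul_one]
  have hDexp : Dps = PowerSeries.C (R := K) (d * (1 - d))
      + PowerSeries.C (R := K) (e * (1 - 2 * d)) * PowerSeries.X ^ 1
      + PowerSeries.C (R := K) (-(e * e)) * PowerSeries.X ^ 2 := by
    rw [hDps]
    simp only [map_mul, map_add, map_sub, map_one, map_neg, map_ofNat]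
    ring
  have hcoeff : ∀ ℓ : ℕ, PowerSeries.coeff (R := K) ℓ B * (d * (1 - d))
      + (if 1 ≤ ℓ then PowerSeries.coeff (R := K) (ℓ - 1) B * (e * (1 - 2 * d)) else 0)
      + (if 2 ≤ ℓ then PowerSeries.coeff (R := K) (ℓ - 2) B * (-(e * e)) else 0)
      = (d * (1 - d)) * PowerSeries.coeff (R := K) ℓ α := by
    intro ℓ
    have h : PowerSeries.coeff (R := K) ℓ (B * PowerSeries.C (R := K) (d * (1 - d))
        + (B * PowerSeries.C (R := K) (e * (1 - 2 * d))) * PowerSeries.X ^ 1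
        + (B * PowerSeries.C (R := K) (-(e * e))) * PowerSeries.X ^ 2)
        = (d * (1 - d)) * PowerSeries.coeff (R := K) ℓ α := by
      rw [show B * PowerSeries.C (R := K) (d * (1 - d))
          + (B * PowerSeries.C (R := K) (e * (1 - 2 * d))) * PowerSeries.X ^ 1
          + (B * PowerSeries.C (R := K) (-(e * e))) * PowerSeries.X ^ 2
          = B * (PowerSeries.C (R := K) (d * (1 - d))
          + PowerSeries.C (R := K) (e * (1 - 2 * d)) * PowerSeries.X ^ 1
          + PowerSeries.C (R := K) (-(e * e)) * PowerSeries.X ^ 2) by ring,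
        ← hDexp, hBD, PowerSeries.coeff_C_mul]
    rw [map_add, map_add, PowerSeries.coeff_mul_C, PowerSeries.coeff_mul_X_pow',
      PowerSeries.coeff_mul_X_pow'] at h
    simp only [PowerSeries.coeff_mul_C] at h
    exact h
  have hb0 : PowerSeries.coeff (R := K) 0 B = 1 := by
    have h := hcoeff 0
    rw [if_neg (by omega : ¬ 1 ≤ 0), if_neg (by omega : ¬ 2 ≤ 0), add_zero, add_zero,
      hα0, mul_one] at h
    exact mul_right_cancel₀ (mul_ne_zero hd hd1) (by rw [one_mul]; exact h)
  have hvc0 : v (d * (1 - d)) = (((n : ℚ) - (s : ℚ) : ℚ) : WithTop ℚ) := by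
    have h := vmul d (1 - d) 0 ((n : ℚ) - (s : ℚ)) hvd hvd1
    simpa using h
  have hvc1 : v (e * (1 - 2 * d)) = (((n : ℚ) - ((s : ℚ) - 1) / 2 : ℚ) : WithTop ℚ) := by
    have h := vmul e (1 - 2 * d) _ 0 hve hv12d
    simpa using h
  have hvc2 : v (-(e * e)) = ((2 * (n : ℚ) - ((s : ℚ) - 1) : ℚ) : WithTop ℚ) := by
    rw [hvneg]
    rw [vmul e e _ _ hve hve]
    exact WithTop.coe_eq_coe.mpr (by ring)
  have key : ∀ ℓ : ℕ, v (PowerSeries.coeff (R := K) ℓ B) = (((S ℓ : ℚ) / 2 : ℚ) : WithTop ℚ) := by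
    intro ℓ
    induction ℓ using Nat.strong_induction_on with
    | _ ℓ ih =>
      rcases Nat.eq_zero_or_pos ℓ with h0 | hpos
      · subst h0
        rw [hb0, hv1]
        norm_num [S]
      · have h := hcoeff ℓ
        rw [if_pos (by omega : 1 ≤ ℓ)] at h
        set t3 : K := (if 2 ≤ ℓ then PowerSeries.coeff (R := K) (ℓ - 2) B * (-(e * e)) else 0) with ht3
        have heq : PowerSeries.coeff (R := K) ℓ B * (d * (1 - d)) =
            (d * (1 - d)) * PowerSeries.coeff (R := K) ℓ α
            + (-(PowerSeries.coeff (R := K) (ℓ - 1) B * (e * (1 - 2 * d))) + -t3) := by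
          linear_combination h
        have hvx : v ((d * (1 - d)) * PowerSeries.coeff (R := K) ℓ α)
            = (((((n : ℚ) - (s : ℚ)) + (S ℓ : ℚ) / 2) : ℚ) : WithTop ℚ) :=
          vmul _ _ _ _ hvc0 (hα ℓ hpos)
        have hSl1 : S ℓ ≤ S (ℓ - 1) + 1 := by
          have h1 := S_succ_le (ℓ - 1)
          rwa [Nat.sub_add_cancel hpos] at h1
        have hlt2 : v ((d * (1 - d)) * PowerSeries.coeff (R := K) ℓ α)
            < v (-(PowerSeries.coeff (R := K) (ℓ - 1) B * (e * (1 - 2 * d)))) := by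
          have hvt2 : v (-(PowerSeries.coeff (R := K) (ℓ - 1) B * (e * (1 - 2 * d))))
              = ((((S (ℓ - 1) : ℚ) / 2) + ((n : ℚ) - ((s : ℚ) - 1) / 2) : ℚ) : WithTop ℚ) := by
            rw [hvneg]
            exact vmul _ _ _ _ (ih (ℓ - 1) (by omega)) hvc1
          rw [hvx, hvt2]
          apply WithTop.coe_lt_coe.mpr
          have h1 : (S ℓ : ℚ) ≤ (S (ℓ - 1) : ℚ) + 1 := by exact_mod_cast hSl1
          linarith
        have hlt3 : v ((d * (1 - d)) * PowerSeries.coeff (R := K) ℓ α) < v (-t3) := by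
          rcases lt_or_ge ℓ 2 with h2 | h2
          · rw [ht3, if_neg (by omega), neg_zero, (hv0 (0 : K)).mpr rfl, hvx]
            exact WithTop.coe_lt_top _
          · have hvt3 : v (-t3)
                = (((S (ℓ - 2) : ℚ) / 2 + (2 * (n : ℚ) - ((s : ℚ) - 1)) : ℚ) : WithTop ℚ) := by
              rw [ht3, if_pos h2, hvneg]
              exact vmul _ _ _ _ (ih (ℓ - 2) (by omega)) hvc2
            rw [hvx, hvt3]
            apply WithTop.coe_lt_coe.mpr
            have hb : S ℓ ≤ S (ℓ - 2) + 2 := by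
              have h1 := S_succ_le (ℓ - 2)
              have h2' := S_succ_le (ℓ - 2 + 1)
              rw [show ℓ - 2 + 1 + 1 = ℓ by omega] at h2'
              omega
            have h1 : (S ℓ : ℚ) ≤ (S (ℓ - 2) : ℚ) + 2 := by exact_mod_cast hb
            linarith
        have hsum : v ((d * (1 - d)) * PowerSeries.coeff (R := K) ℓ α)
            < v (-(PowerSeries.coeff (R := K) (ℓ - 1) B * (e * (1 - 2 * d))) + -t3) :=
          lt_of_lt_of_le (lt_min hlt2 hlt3) (hvadd _ _)
        have hmain : v (PowerSeries.coeff (R := K) ℓ B * (d * (1 - d)))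
            = v ((d * (1 - d)) * PowerSeries.coeff (R := K) ℓ α) := by
          rw [heq]
          exact hlt _ _ hsum
        rw [hvmul, hvc0, hvx] at hmain
        have hfin : v (PowerSeries.coeff (R := K) ℓ B) + (((n : ℚ) - (s : ℚ) : ℚ) : WithTop ℚ)
            = (((S ℓ : ℚ) / 2 : ℚ) : WithTop ℚ) + (((n : ℚ) - (s : ℚ) : ℚ) : WithTop ℚ) := by
          rw [hmain, ← WithTop.coe_add]
          exact WithTop.coe_eq_coe.mpr (by ring)
        exact WithTop.add_right_cancel WithTop.coe_ne_top hfin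
  exact ⟨hd, hd1, hb0, fun ℓ _ => key ℓ⟩
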